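/- Let C = k(k+1)/2 + r with 0 ≤ r ≤ k, k ≥ 1. Any valid partition of the N(N−1)/2 requests into parts B_1,…,B_W (each part satisfying the load-≤C constraint) uses a total number of vertices A = ∑_ω |V(B_ω)| satisfying A ≥ ⌈(N(N−1)/2)·(k+1)/(k(k+1)+r)⌉. -/

import Mathlib

/-- The load induced on the arc of the directed cycle `C⃗_p` going from `t` to `t+1`
by a set `S` of requests, each request `(i,j)` being routed clockwise from `i` to `j`. -/
def cload (p : ℕ) (S : Finset (ZMod p × ZMod p)) (t : ZMod p) : ℕ :=
  (S.filter fun a => (t - a.1).val < (a.2 - a.1).val).card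

/-- The set of vertices (endpoints of arcs) of a digraph given by its arc set. -/
def verts (p : ℕ) (S : Finset (ZMod p × ZMod p)) : Finset (ZMod p) :=
  S.image Prod.fst ∪ S.image Prod.snd

lemma gauss_tail (k p : ℕ) :
    ∑ d ∈ Finset.Icc 1 p, (k + 1 - d) ≤ k * (k + 1) / 2 := by
  have e1 : ∑ d ∈ Finset.Icc 1 p, (k + 1 - d) = ∑ j ∈ Finset.range p, (k - j) := by
    rw [show Finset.Icc 1 p = Finset.Ico 1 (p+1) by rfl, Finset.sum_Ico_eq_sum_range]
    simp only [Nat.add_sub_cancel]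
    exact Finset.sum_congr rfl fun j _ => by omega
  have e2 : ∑ j ∈ Finset.range p, (k - j) ≤ ∑ j ∈ Finset.range (max p (k+1)), (k - j) :=
    Finset.sum_le_sum_of_subset (Finset.range_subset_range.2 (le_max_left _ _))
  have e3 : ∑ j ∈ Finset.range (max p (k+1)), (k - j) = ∑ j ∈ Finset.range (k+1), (k - j) := by
    refine (Finset.sum_subset (Finset.range_subset_range.2 (le_max_right _ _)) ?_).symm
    intro x hx hnx
    simp only [Finset.mem_range] at hx hnx
    omega
  have e4 : ∑ j ∈ Finset.range (k+1), (k - j) = ∑ j ∈ Finset.range (k+1), j := by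
    have := Finset.sum_range_reflect (fun j => j) (k+1)
    simpa using this
  have e5 : (∑ j ∈ Finset.range (k+1), j) * 2 = (k+1) * k := Finset.sum_range_id_mul_two (k+1)
  have e6 : (k+1) * k = k * (k+1) := Nat.mul_comm _ _
  omega

/-- Key lemma: a digraph on the cycle with load at most `C = k(k+1)/2 + r` has
`(k+1)·|S| ≤ (k(k+1)+r)·|V(S)|`. -/
lemma key_bound (N C k r : ℕ) (hN : 2 ≤ N) (hC : C = k * (k + 1) / 2 + r)
    (S : Finset (ZMod N × ZMod N)) (hS : ∀ a ∈ S, a.1 ≠ a.2)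
    (hload : ∀ t, cload N S t ≤ C) :
    (k + 1) * S.card ≤ (k * (k + 1) + r) * (verts N S).card := by
  haveI : NeZero N := ⟨by omega⟩
  set V := verts N S with hV
  set p := V.card with hp
  set glen : (ZMod N × ZMod N) → ℕ :=
    fun a => (V.filter fun v => (v - a.1).val < (a.2 - a.1).val).card with hglen
  have hmem1 : ∀ a ∈ S, a.1 ∈ V := fun a ha =>
    Finset.mem_union.2 (Or.inl (Finset.mem_image_of_mem Prod.fst ha))
  have hmem2 : ∀ a ∈ S, a.2 ∈ V := fun a ha =>
    Finset.mem_union.2 (Or.inr (Finset.mem_image_of_mem Prod.snd ha))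
  -- glen ≥ 1 on S
  have hglen1 : ∀ a ∈ S, 1 ≤ glen a := by
    intro a ha
    have h1 : a.1 ∈ V.filter fun v => (v - a.1).val < (a.2 - a.1).val := by
      refine Finset.mem_filter.2 ⟨hmem1 a ha, ?_⟩
      simp only [sub_self, ZMod.val_zero]
      exact Nat.pos_of_ne_zero fun h =>
        (hS a ha) (sub_eq_zero.mp ((ZMod.val_eq_zero _).1 h)).symm
    exact Finset.card_pos.2 ⟨a.1, h1⟩
  have hglenp : ∀ a, glen a ≤ p := fun a => Finset.card_filter_le _ _
  -- double counting: total load over vertex-edges = sum of gap-lengths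
  have hsum : ∑ v ∈ V, cload N S v = ∑ a ∈ S, glen a := by
    simp only [cload, hglen, Finset.card_filter]
    exact Finset.sum_comm
  have hloadsum : ∑ v ∈ V, cload N S v ≤ C * p := by
    calc ∑ v ∈ V, cload N S v ≤ V.card • C :=
          Finset.sum_le_card_nsmul V _ C (fun v _ => hload v)
      _ = C * p := by rw [smul_eq_mul, hp, mul_comm]
  -- gap-length determines the arc given its start
  have hinj : ∀ a ∈ S, ∀ b ∈ S, a.1 = b.1 → glen a = glen b → a = b := by
    intro a ha b hb h1 hgl
    set f : ZMod N → ℕ := fun v => (v - a.1).val with hf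
    have hfinj : Function.Injective f := fun v w h => by
      have := ZMod.val_injective N h
      exact sub_left_injective this
    have himg : ∀ L : ℕ,
        (V.filter fun v => f v < L).card = ((V.image f).filter fun x => x < L).card := by
      intro L
      rw [Finset.filter_image, Finset.card_image_of_injective _ hfinj]
    have key : ∀ c : ZMod N, c ∈ V →
        ∀ c' : ZMod N, c' ∈ V →
        (V.filter fun v => f v < f c).card = (V.filter fun v => f v < f c').card → f c = f c' := by
      intro c hc c' hc' hcard
      rw [himg, himg] at hcard
      by_contra hne
      rcases Nat.lt_or_ge (f c) (f c') with hlt | hge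
      · have hsub : ((V.image f).filter fun x => x < f c) ⊂
            ((V.image f).filter fun x => x < f c') := by
          refine Finset.ssubset_iff_of_subset
            (fun x hx => by
              simp only [Finset.mem_filter] at hx ⊢
              exact ⟨hx.1, lt_trans hx.2 hlt⟩) |>.2 ?_
          exact ⟨f c, Finset.mem_filter.2 ⟨Finset.mem_image_of_mem f hc, hlt⟩,
            fun h => (Finset.mem_filter.1 h).2.false⟩
        exact absurd hcard (Nat.ne_of_lt (Finset.card_lt_card hsub))
      · have hlt : f c' < f c := lt_of_le_of_ne hge (fun h => hne h.symm)
        have hsub : ((V.image f).filter fun x => x < f c') ⊂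
            ((V.image f).filter fun x => x < f c) := by
          refine Finset.ssubset_iff_of_subset
            (fun x hx => by
              simp only [Finset.mem_filter] at hx ⊢
              exact ⟨hx.1, lt_trans hx.2 hlt⟩) |>.2 ?_
          exact ⟨f c', Finset.mem_filter.2 ⟨Finset.mem_image_of_mem f hc', hlt⟩,
            fun h => (Finset.mem_filter.1 h).2.false⟩
        exact absurd hcard.symm (Nat.ne_of_lt (Finset.card_lt_card hsub))
    have hga : glen a = (V.filter fun v => f v < f a.2).card := rfl
    have hgb : glen b = (V.filter fun v => f v < f b.2).card := by
      simp only [hglen, hf, ← h1]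
    have : f a.2 = f b.2 := by
      apply key a.2 (hmem2 a ha) b.2 (hmem2 b hb)
      rw [← hga, ← hgb, hgl]
    have h2 : a.2 = b.2 := by
      have := ZMod.val_injective N this
      have := sub_left_injective this
      exact this
    exact Prod.ext h1 h2
  -- fibers of glen
  set n : ℕ → ℕ := fun d => (S.filter fun a => glen a = d).card with hn
  have hmaps : ∀ a ∈ S, glen a ∈ Finset.Icc 1 p := fun a ha =>
    Finset.mem_Icc.2 ⟨hglen1 a ha, hglenp a⟩
  have hfibcard : ∀ d, n d ≤ p := by
    intro d
    refine Finset.card_le_card_of_injOn Prod.fst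
      (fun a ha => hmem1 a (Finset.mem_filter.1 ha).1) ?_
    intro a ha b hb hab
    simp only [Finset.coe_filter, Set.mem_setOf_eq] at ha hb
    exact hinj a ha.1 b hb.1 hab (ha.2.trans hb.2.symm)
  have hcardsum : S.card = ∑ d ∈ Finset.Icc 1 p, n d :=
    Finset.card_eq_sum_card_fiberwise hmaps
  have hglensum : ∑ d ∈ Finset.Icc 1 p, d * n d = ∑ a ∈ S, glen a := by
    rw [← Finset.sum_fiberwise_of_maps_to hmaps glen]
    refine Finset.sum_congr rfl fun d _ => ?_
    rw [hn]
    rw [Finset.sum_congr rfl (fun a ha => (Finset.mem_filter.1 ha).2)]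
    rw [Finset.sum_const, smul_eq_mul, mul_comm]
  -- per-degree bound
  have h4 : ∀ d ∈ Finset.Icc 1 p, (k + 1) * n d ≤ d * n d + (k + 1 - d) * p := by
    intro d _
    calc (k + 1) * n d ≤ (d + (k + 1 - d)) * n d :=
          Nat.mul_le_mul_right _ (by omega)
      _ = d * n d + (k + 1 - d) * n d := add_mul _ _ _
      _ ≤ d * n d + (k + 1 - d) * p :=
          Nat.add_le_add_left (Nat.mul_le_mul_left _ (hfibcard d)) _
  have heven : k * (k + 1) / 2 * 2 = k * (k + 1) :=
    Nat.div_mul_cancel (Nat.even_mul_succ_self k).two_dvd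
  calc (k + 1) * S.card = ∑ d ∈ Finset.Icc 1 p, (k + 1) * n d := by
        rw [hcardsum, Finset.mul_sum]
    _ ≤ ∑ d ∈ Finset.Icc 1 p, (d * n d + (k + 1 - d) * p) := Finset.sum_le_sum h4
    _ = (∑ d ∈ Finset.Icc 1 p, d * n d) + (∑ d ∈ Finset.Icc 1 p, (k + 1 - d)) * p := by
        rw [Finset.sum_add_distrib, Finset.sum_mul]
    _ ≤ C * p + (k * (k + 1) / 2) * p := by
        refine Nat.add_le_add ?_ (Nat.mul_le_mul_right _ (gauss_tail k p))
        rw [hglensum, ← hsum]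
        exact hloadsum
    _ ≤ (k * (k + 1) + r) * p := by
        rw [hC]
        have : (k * (k + 1) / 2 + r) * p + k * (k + 1) / 2 * p
            = (k * (k + 1) / 2 * 2 + r) * p := by ring
        rw [this, heven]

theorem stmt_10 (N C k r W : ℕ) (hN : 2 ≤ N) (hk : 1 ≤ k) (hr : r ≤ k)
    (hC : C = k * (k + 1) / 2 + r)
    -- `T` is the tournament of requests: all shortest clockwise arcs, with exactly one
    -- arc chosen per diametrical pair when `N` is even.
    (T : Finset (ZMod N × ZMod N))
    (hT1 : ∀ a ∈ T, a.1 ≠ a.2 ∧ 2 * (a.2 - a.1).val ≤ N)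
    (hT2 : ∀ i j : ZMod N, i ≠ j → 2 * (j - i).val < N → (i, j) ∈ T)
    (hT3 : ∀ i j : ZMod N, 2 * (j - i).val = N → ((i, j) ∈ T ↔ (j, i) ∉ T))
    -- a valid partition of the requests into `W` parts, each of load at most `C`
    (B : Fin W → Finset (ZMod N × ZMod N))
    (hdisj : ∀ w w', w ≠ w' → Disjoint (B w) (B w'))
    (hcover : ∀ a : ZMod N × ZMod N, a ∈ T ↔ ∃ w, a ∈ B w)
    (hload : ∀ w, ∀ t : ZMod N, cload N (B w) t ≤ C) :
    ⌈((N : ℚ) * ((N : ℚ) - 1) / 2) * ((k : ℚ) + 1) / ((k : ℚ) * (k + 1) + r)⌉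
      ≤ ((∑ w : Fin W, (verts N (B w)).card : ℕ) : ℤ) := by
  haveI : NeZero N := ⟨by omega⟩
  -- val of opposite arcs sum to N
  have hvals : ∀ i j : ZMod N, i ≠ j → (j - i).val + (i - j).val = N := by
    intro i j hij
    have hne : j - i ≠ 0 := sub_ne_zero.mpr (Ne.symm hij)
    have h1 : i - j = -(j - i) := by ring
    rw [h1, ZMod.neg_val, if_neg hne]
    have := ZMod.val_lt (j - i)
    have hpos : 0 < (j - i).val :=
      Nat.pos_of_ne_zero fun h => hne ((ZMod.val_eq_zero _).1 h)
    omega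
  -- T is a tournament: 2|T| = N² - N
  have hTdisj : Disjoint T (T.image Prod.swap) := by
    rw [Finset.disjoint_left]
    rintro a haT haS
    obtain ⟨b, hbT, hsw⟩ := Finset.mem_image.1 haS
    have hrev : (a.2, a.1) ∈ T := by
      have : b = (a.2, a.1) := by
        rw [← hsw]; rfl
      rwa [this] at hbT
    obtain ⟨hne, hle1⟩ := hT1 a haT
    obtain ⟨-, hle2⟩ := hT1 _ hrev
    simp only at hle2
    have hsum := hvals a.1 a.2 hne
    have heq : 2 * (a.2 - a.1).val = N := by omega
    exact (hT3 a.1 a.2 heq).1 (by rwa [show ((a.1, a.2) : ZMod N × ZMod N) = a from rfl]) hrev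
  have hTunion : T ∪ T.image Prod.swap = Finset.univ.offDiag := by
    ext a
    simp only [Finset.mem_union, Finset.mem_image, Finset.mem_offDiag, Finset.mem_univ,
      true_and]
    constructor
    · rintro (h | ⟨b, hb, rfl⟩)
      · exact (hT1 a h).1
      · exact Ne.symm (hT1 b hb).1
    · intro hne
      rcases Nat.lt_trichotomy (2 * (a.2 - a.1).val) N with hlt | heq | hgt
      · left
        have := hT2 a.1 a.2 hne hlt
        simpa using this
      · by_cases hT : (a.1, a.2) ∈ T
        · left; simpa using hT
        · right
          refine ⟨(a.2, a.1), ?_, rfl⟩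
          by_contra hT'
          exact hT ((hT3 a.1 a.2 heq).2 hT')
      · right
        have hsum := hvals a.1 a.2 hne
        have : 2 * (a.1 - a.2).val < N := by omega
        exact ⟨(a.2, a.1), hT2 a.2 a.1 (Ne.symm hne) this, rfl⟩
  have hTcard : T.card * 2 = N * N - N := by
    have h1 : (T ∪ T.image Prod.swap).card = T.card + (T.image Prod.swap).card :=
      Finset.card_union_of_disjoint hTdisj
    have h2 : (T.image Prod.swap).card = T.card :=
      Finset.card_image_of_injective _ Prod.swap_injective
    have h3 : (Finset.univ : Finset (ZMod N)).offDiag.card = N * N - N := by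
      rw [Finset.offDiag_card, Finset.card_univ, ZMod.card]
    rw [hTunion, h3] at h1
    omega
  -- sum of part sizes = |T|
  have hsumB : ∑ w : Fin W, (B w).card = T.card := by
    have hbu : Finset.univ.biUnion B = T := by
      ext a
      simp only [Finset.mem_biUnion, Finset.mem_univ, true_and]
      exact ((hcover a).symm)
    rw [← hbu]
    exact (Finset.card_biUnion fun x _ y _ hxy => hdisj x y hxy).symm
  -- key bound for each part
  have hkey : ∀ w, (k + 1) * (B w).card ≤ (k * (k + 1) + r) * (verts N (B w)).card := by
    intro w
    refine key_bound N C k r hN hC (B w) ?_ (hload w)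
    intro a ha
    exact (hT1 a ((hcover a).2 ⟨w, ha⟩)).1
  set A := ∑ w : Fin W, (verts N (B w)).card with hA
  have hmain : (k + 1) * T.card ≤ (k * (k + 1) + r) * A := by
    calc (k + 1) * T.card = ∑ w : Fin W, (k + 1) * (B w).card := by
          rw [← hsumB, Finset.mul_sum]
      _ ≤ ∑ w : Fin W, (k * (k + 1) + r) * (verts N (B w)).card :=
          Finset.sum_le_sum fun w _ => hkey w
      _ = (k * (k + 1) + r) * A := by rw [hA, Finset.mul_sum]
  -- conclude over ℚ
  rw [Int.ceil_le]
  push_cast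
  have hD : (0 : ℚ) < (k : ℚ) * (k + 1) + r := by
    have : (1 : ℚ) ≤ (k : ℚ) := by exact_mod_cast hk
    positivity
  rw [div_le_iff₀ hD]
  have hmainQ : ((k : ℚ) + 1) * (T.card : ℚ) ≤ ((k : ℚ) * (k + 1) + r) * (A : ℚ) := by
    exact_mod_cast hmain
  have hTcardQ : (T.card : ℚ) * 2 = (N : ℚ) * N - N := by
    have hle : N ≤ N * N := Nat.le_mul_of_pos_left N (by omega)
    have h := hTcard
    have h2 : ((T.card * 2 : ℕ) : ℚ) = ((N * N - N : ℕ) : ℚ) := by rw [h]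
    rw [Nat.cast_sub hle] at h2
    push_cast at h2
    linarith
  nlinarith [hmainQ, hTcardQ]
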